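/- For all α, β ∈ {1,2}, every integer n ≥ 0, and all real (v,u): Σ_{i=0}^{n} (−1)^{n−i}·( ∂θ_{α,i}/∂v · ∂θ_{β,n−i}/∂u + ∂θ_{α,i}/∂u · ∂θ_{β,n−i}/∂v ) = η_{αβ} if n = 0 and = 0 if n ≥ 1, where η_{11} = η_{22} = 0 and η_{12} = η_{21} = 1. Equivalently, as formal power series in z, ⟨∇θ_α(v,u;z), ∇θ_β(v,u;−z)⟩ = η_{αβ}, which ensures that the genus-zero two-point generating expression (1/(z+w))·( ∂_vθ_α(z)∂_uθ_β(w) + ∂_uθ_α(z)∂_vθ_β(w) − η_{αβ} ) is a well-defined power series in z and w. -/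

import Mathlib

/-!
The dispersionless Hamiltonian densities `θ_{α,p}(v,u)` of the extended Toda
hierarchy and their partial derivatives.
-/

noncomputable section Toda

/-- The harmonic number `H_m = Σ_{j=1}^m 1/j`. -/
def harm (m : ℕ) : ℝ := ∑ j ∈ Finset.Icc 1 m, (1 : ℝ) / (j : ℝ)

/-- `θ_{2,p}(v,u) = Σ_{2m ≤ p+1} e^{mu} v^{p+1−2m} / ((m!)² (p+1−2m)!)`. -/
def theta2 (p : ℕ) (v u : ℝ) : ℝ :=
  ∑ m ∈ Finset.range ((p + 1) / 2 + 1),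
    Real.exp (m * u) * v ^ (p + 1 - 2 * m) /
      ((Nat.factorial m : ℝ) ^ 2 * (Nat.factorial (p + 1 - 2 * m) : ℝ))

/-- `θ_{1,p}(v,u) = −2 Σ_{2m ≤ p} (H_m − u/2) e^{mu} v^{p−2m} / ((m!)² (p−2m)!)`. -/
def theta1 (p : ℕ) (v u : ℝ) : ℝ :=
  -2 * ∑ m ∈ Finset.range (p / 2 + 1),
    (harm m - u / 2) * Real.exp (m * u) * v ^ (p - 2 * m) /
      ((Nat.factorial m : ℝ) ^ 2 * (Nat.factorial (p - 2 * m) : ℝ))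

/-- Partial derivative in the first variable `v`. -/
def dv (f : ℝ → ℝ → ℝ) (v u : ℝ) : ℝ := deriv (fun v' => f v' u) v

/-- Partial derivative in the second variable `u`. -/
def du (f : ℝ → ℝ → ℝ) (v u : ℝ) : ℝ := deriv (fun u' => f v u') u

/-- The combined family `θ_{α,p}` (`α = 1` encoded as `0`, `α = 2` as `1`). -/
def theta (a : Fin 2) : ℕ → ℝ → ℝ → ℝ := if a = 0 then theta1 else theta2

/-- The Gram matrix `η` of the flat metric: `η_{11} = η_{22} = 0`, `η_{12} = η_{21} = 1`. -/
def eta (a b : Fin 2) : ℝ := if a = b then 0 else 1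

def GG (c : ℕ → ℝ) (p : ℕ) (v : ℝ) : ℝ :=
  ∑ r ∈ Finset.range (p+1), c r * v ^ (p-r) / (Nat.factorial (p-r) : ℝ)

open PowerSeries in
lemma GG_eq_coeff (c : ℕ → ℝ) (p : ℕ) (v : ℝ) :
    GG c p v = coeff p (rescale v (exp ℝ) * PowerSeries.mk c) := by
  rw [coeff_mul, Finset.Nat.sum_antidiagonal_eq_sum_range_succ_mk]
  rw [GG, ← Finset.sum_range_reflect (fun r => c r * v ^ (p-r) / (Nat.factorial (p-r) : ℝ)) (p+1)]
  apply Finset.sum_congr rfl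
  intro k hk
  have hkp : k ≤ p := by simpa [Nat.lt_succ_iff] using Finset.mem_range.mp hk
  have h1 : p + 1 - 1 - k = p - k := by omega
  have h2 : p - (p - k) = k := by omega
  rw [h1, h2, coeff_rescale, coeff_exp, PowerSeries.coeff_mk]
  have h3 : (algebraMap ℚ ℝ) (1 / (Nat.factorial k : ℚ)) = 1 / (Nat.factorial k : ℝ) := by simp
  rw [h3]; ring

open PowerSeries in
lemma neg_GG_eq_coeff (d : ℕ → ℝ) (j : ℕ) (v : ℝ) :
    (-1:ℝ) ^ j * GG d j v
      = coeff j (rescale (-v) (exp ℝ) * PowerSeries.mk (fun s => (-1:ℝ)^s * d s)) := by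
  rw [coeff_mul, Finset.Nat.sum_antidiagonal_eq_sum_range_succ_mk, GG, Finset.mul_sum,
    ← Finset.sum_range_reflect
      (fun r => (-1:ℝ)^j * (d r * v ^ (j-r) / (Nat.factorial (j-r) : ℝ))) (j+1)]
  apply Finset.sum_congr rfl
  intro k hk
  have hkp : k ≤ j := by simpa [Nat.lt_succ_iff] using Finset.mem_range.mp hk
  have h1 : j + 1 - 1 - k = j - k := by omega
  have h2 : j - (j - k) = k := by omega
  rw [h1, h2, coeff_rescale, coeff_exp, PowerSeries.coeff_mk]
  have h3 : (algebraMap ℚ ℝ) (1 / (Nat.factorial k : ℚ)) = 1 / (Nat.factorial k : ℝ) := by simp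
  have h4 : (-1:ℝ)^j = (-1:ℝ)^k * (-1:ℝ)^(j-k) := by
    rw [← pow_add]; congr 1; omega
  rw [h3, h4, neg_pow v k]; ring

open PowerSeries in
lemma core (c d : ℕ → ℝ) (v : ℝ) (n : ℕ) :
    ∑ i ∈ Finset.range (n+1), (-1:ℝ) ^ (n-i) * (GG c i v * GG d (n-i) v)
      = ∑ r ∈ Finset.range (n+1), (-1:ℝ) ^ (n-r) * (c r * d (n-r)) := by
  have lhs_eq : ∑ i ∈ Finset.range (n+1), (-1:ℝ) ^ (n-i) * (GG c i v * GG d (n-i) v)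
      = coeff n ((rescale v (exp ℝ) * PowerSeries.mk c)
          * (rescale (-v) (exp ℝ) * PowerSeries.mk (fun s => (-1:ℝ)^s * d s))) := by
    rw [coeff_mul, Finset.Nat.sum_antidiagonal_eq_sum_range_succ_mk]
    apply Finset.sum_congr rfl
    intro i hi
    rw [← GG_eq_coeff, ← neg_GG_eq_coeff]
    ring
  rw [lhs_eq, mul_mul_mul_comm, exp_mul_exp_eq_exp_add, add_neg_cancel, rescale_zero]
  rw [show ((C (R := ℝ)).comp constantCoeff) (exp ℝ) = 1 by simp [constantCoeff_exp], one_mul]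
  rw [coeff_mul, Finset.Nat.sum_antidiagonal_eq_sum_range_succ_mk]
  apply Finset.sum_congr rfl
  intro r hr
  rw [PowerSeries.coeff_mk, PowerSeries.coeff_mk]
  ring


lemma fact_ne (m : ℕ) : ((Nat.factorial m : ℝ)) ≠ 0 := by
  exact_mod_cast Nat.factorial_ne_zero m

lemma sum_reflect (F : ℕ → ℝ) (n : ℕ) :
    ∑ m ∈ Finset.range (n + 1), F m = ∑ m ∈ Finset.range (n + 1), F (n - m) := by
  exact (Finset.sum_range_reflect F (n + 1)).symm

def ff (m : ℕ) : ℝ := 1 / ((Nat.factorial m : ℝ)) ^ 2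
def gg (m : ℕ) : ℝ := harm m * ff m

lemma ff_zero : ff 0 = 1 := by simp [ff]
lemma harm_zero : harm 0 = 0 := by simp [harm]
lemma gg_zero : gg 0 = 0 := by simp [gg, harm_zero]

lemma harm_succ (m : ℕ) : harm (m + 1) = harm m + 1 / (m + 1 : ℝ) := by
  rw [harm, Finset.sum_Icc_succ_top (by omega)]
  push_cast [harm]; ring


lemma rec_ff (m : ℕ) : ((m:ℝ) + 1) ^ 2 * ff (m + 1) = ff m := by
  have h := fact_ne m
  have h2 : ((m:ℝ) + 1) ≠ 0 := by positivity
  rw [ff, ff, Nat.factorial_succ]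
  push_cast
  field_simp

lemma rec_gg (m : ℕ) :
    ((m:ℝ) + 1) ^ 2 * gg (m + 1) = gg m + ((m:ℝ) + 1) * ff (m + 1) := by
  have h := fact_ne m
  have h2 : ((m:ℝ) + 1) ≠ 0 := by positivity
  rw [gg, gg, ff, ff, harm_succ, Nat.factorial_succ]
  push_cast
  field_simp


lemma k1 (n : ℕ) :
    2 * ∑ m ∈ Finset.range (n+1), (m:ℝ) * (ff m * ff (n-m))
      = (n:ℝ) * ∑ m ∈ Finset.range (n+1), ff m * ff (n-m) := by
  have h : ∑ m ∈ Finset.range (n+1), (m:ℝ) * (ff m * ff (n-m))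
      = ∑ m ∈ Finset.range (n+1), ((n:ℝ) - m) * (ff m * ff (n-m)) := by
    rw [sum_reflect (fun m => (m:ℝ) * (ff m * ff (n-m))) n]
    apply Finset.sum_congr rfl
    intro m hm
    have hmn : m ≤ n := by simpa [Nat.lt_succ_iff] using hm
    have h1 : n - (n - m) = m := by omega
    have h2 : ((n - m : ℕ):ℝ) = (n:ℝ) - m := by
      push_cast [hmn]; ring
    rw [h1, h2]; ring
  rw [two_mul]
  nth_rewrite 2 [h]
  rw [← Finset.sum_add_distrib, Finset.mul_sum]
  exact Finset.sum_congr rfl fun m hm => by ring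

lemma k2 (n : ℕ) :
    ∑ m ∈ Finset.range (n+1), (m:ℝ) * (ff m * gg (n-m))
      = (n:ℝ) * (∑ m ∈ Finset.range (n+1), gg m * ff (n-m))
        - ∑ m ∈ Finset.range (n+1), (m:ℝ) * (gg m * ff (n-m)) := by
  have h : ∑ m ∈ Finset.range (n+1), (m:ℝ) * (ff m * gg (n-m))
      = ∑ m ∈ Finset.range (n+1), ((n:ℝ) - m) * (gg m * ff (n-m)) := by
    rw [sum_reflect (fun m => (m:ℝ) * (ff m * gg (n-m))) n]
    apply Finset.sum_congr rfl
    intro m hm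
    have hmn : m ≤ n := by simpa [Nat.lt_succ_iff] using hm
    have h1 : n - (n - m) = m := by omega
    have h2 : ((n - m : ℕ):ℝ) = (n:ℝ) - m := by push_cast [hmn]; ring
    rw [h1, h2]; ring
  rw [h, Finset.mul_sum, ← Finset.sum_sub_distrib]
  exact Finset.sum_congr rfl fun m hm => by ring

lemma k6 (n : ℕ) :
    ∑ m ∈ Finset.range (n+1), (m:ℝ) * ((n:ℝ) - m) * (gg m * ff (n-m))
      = ∑ m ∈ Finset.range (n+1), (m:ℝ) * ((n:ℝ) - m) * (ff m * gg (n-m)) := by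
  rw [sum_reflect (fun m => (m:ℝ) * ((n:ℝ) - m) * (gg m * ff (n-m))) n]
  apply Finset.sum_congr rfl
  intro m hm
  have hmn : m ≤ n := by simpa [Nat.lt_succ_iff] using hm
  have h1 : n - (n - m) = m := by omega
  have h2 : ((n - m : ℕ):ℝ) = (n:ℝ) - m := by push_cast [hmn]; ring
  rw [h1, h2]; ring

lemma k3 (n : ℕ) :
    ∑ m ∈ Finset.range (n+1), (m:ℝ)^2 * (gg m * ff (n-m))
      = (∑ j ∈ Finset.range n, gg j * ff (n-1-j))
        + ∑ m ∈ Finset.range (n+1), (m:ℝ) * (ff m * ff (n-m)) := by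
  rw [Finset.sum_range_succ' (fun m => (m:ℝ)^2 * (gg m * ff (n-m))) n]
  rw [Finset.sum_range_succ' (fun m => (m:ℝ) * (ff m * ff (n-m))) n]
  simp only [Nat.cast_zero, gg_zero, Nat.cast_add, Nat.cast_one]
  rw [show ((0:ℝ))^2 * (0 * ff (n-0)) = 0 from by ring, add_zero,
    show ((0:ℝ)) * (ff 0 * ff (n-0)) = 0 from by ring, add_zero,
    ← Finset.sum_add_distrib]
  apply Finset.sum_congr rfl
  intro i hi
  have h1 : n - (i+1) = n - 1 - i := by omega
  have := rec_gg i
  calc ((i:ℝ)+1)^2 * (gg (i+1) * ff (n-(i+1)))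
      = (((i:ℝ)+1)^2 * gg (i+1)) * ff (n-(i+1)) := by ring
    _ = (gg i + ((i:ℝ)+1) * ff (i+1)) * ff (n-(i+1)) := by rw [this]
    _ = gg i * ff (n-1-i) + ((i:ℝ)+1) * (ff (i+1) * ff (n-(i+1))) := by rw [h1]; ring

lemma k4 (n : ℕ) :
    ∑ m ∈ Finset.range (n+1), (m:ℝ)^2 * (ff m * gg (n-m))
      = ∑ j ∈ Finset.range n, ff j * gg (n-1-j) := by
  rw [Finset.sum_range_succ' (fun m => (m:ℝ)^2 * (ff m * gg (n-m))) n]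
  simp only [Nat.cast_zero, Nat.cast_add, Nat.cast_one]
  rw [show ((0:ℝ)^2 * (ff 0 * gg (n-0))) = 0 by ring, add_zero]
  apply Finset.sum_congr rfl
  intro i hi
  have h1 : n - (i+1) = n - 1 - i := by omega
  have := rec_ff i
  calc ((i:ℝ)+1)^2 * (ff (i+1) * gg (n-(i+1)))
      = (((i:ℝ)+1)^2 * ff (i+1)) * gg (n-(i+1)) := by ring
    _ = ff i * gg (n-1-i) := by rw [this, h1]

lemma k5 (n : ℕ) :
    ∑ j ∈ Finset.range n, gg j * ff (n-1-j) = ∑ j ∈ Finset.range n, ff j * gg (n-1-j) := by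
  rw [← Finset.sum_range_reflect (fun j => gg j * ff (n-1-j)) n]
  apply Finset.sum_congr rfl
  intro j hj
  have hjn : j < n := Finset.mem_range.mp hj
  have h1 : n - 1 - (n - 1 - j) = j := by omega
  rw [h1, mul_comm]

lemma k8 (n : ℕ) (hn : 1 ≤ n) :
    ∑ m ∈ Finset.range (n+1), ff m * ff (n-m)
      = 4 * (∑ m ∈ Finset.range (n+1), (m:ℝ) * (gg m * ff (n-m)))
        - 2 * (n:ℝ) * (∑ m ∈ Finset.range (n+1), gg m * ff (n-m)) := by
  have hC : (n:ℝ) * ∑ m ∈ Finset.range (n+1), (m:ℝ) * (gg m * ff (n-m))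
      = ∑ m ∈ Finset.range (n+1), ((m:ℝ)^2 * (gg m * ff (n-m))
          + (m:ℝ) * ((n:ℝ) - m) * (gg m * ff (n-m))) := by
    rw [Finset.mul_sum]
    exact Finset.sum_congr rfl fun m hm => by ring
  have hB : (n:ℝ) * ∑ m ∈ Finset.range (n+1), (m:ℝ) * (ff m * gg (n-m))
      = ∑ m ∈ Finset.range (n+1), ((m:ℝ)^2 * (ff m * gg (n-m))
          + (m:ℝ) * ((n:ℝ) - m) * (ff m * gg (n-m))) := by
    rw [Finset.mul_sum]
    exact Finset.sum_congr rfl fun m hm => by ring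
  have hdiff : (n:ℝ) * (∑ m ∈ Finset.range (n+1), (m:ℝ) * (gg m * ff (n-m)))
      - (n:ℝ) * (∑ m ∈ Finset.range (n+1), (m:ℝ) * (ff m * gg (n-m)))
      = ∑ m ∈ Finset.range (n+1), (m:ℝ) * (ff m * ff (n-m)) := by
    rw [hC, hB, Finset.sum_add_distrib, Finset.sum_add_distrib, k3, k4, k5, k6]
    ring
  have h2 := k2 n
  have h1 := k1 n
  have hn' : (n:ℝ) ≠ 0 := by
    have : 0 < n := hn
    positivity
  have hz : (n:ℝ) * (4 * (∑ m ∈ Finset.range (n+1), (m:ℝ) * (gg m * ff (n-m)))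
      - 2 * (n:ℝ) * (∑ m ∈ Finset.range (n+1), gg m * ff (n-m))
      - ∑ m ∈ Finset.range (n+1), ff m * ff (n-m)) = 0 := by
    linear_combination 2*hdiff + 2*(n:ℝ)*h2 + h1
  rcases mul_eq_zero.mp hz with h | h
  · exact absurd h hn'
  · linarith

lemma keyU (n : ℕ) :
    ∑ m ∈ Finset.range (n+1), ff m * ff (n-m) * ((n:ℝ) - 2*m) = 0 := by
  have h : ∑ m ∈ Finset.range (n+1), ff m * ff (n-m) * ((n:ℝ) - 2*m)
      = -∑ m ∈ Finset.range (n+1), ff m * ff (n-m) * ((n:ℝ) - 2*m) := by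
    nth_rewrite 1 [sum_reflect (fun m => ff m * ff (n-m) * ((n:ℝ) - 2*m)) n]
    rw [← Finset.sum_neg_distrib]
    apply Finset.sum_congr rfl
    intro m hm
    have hmn : m ≤ n := by simpa [Nat.lt_succ_iff] using hm
    have h1 : n - (n - m) = m := by omega
    have h2 : ((n - m : ℕ):ℝ) = (n:ℝ) - m := by push_cast [hmn]; ring
    rw [h1, h2]; ring
  linarith

lemma key0 (n : ℕ) (hn : 1 ≤ n) :
    ∑ m ∈ Finset.range (n+1), ff m * ff (n-m) * (1 + 2 * harm m * ((n:ℝ) - 2*m)) = 0 := by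
  have hsplit : ∑ m ∈ Finset.range (n+1), ff m * ff (n-m) * (1 + 2 * harm m * ((n:ℝ) - 2*m))
      = (∑ m ∈ Finset.range (n+1), ff m * ff (n-m))
        + (2 * (n:ℝ) * (∑ m ∈ Finset.range (n+1), gg m * ff (n-m))
          - 4 * (∑ m ∈ Finset.range (n+1), (m:ℝ) * (gg m * ff (n-m)))) := by
    rw [Finset.mul_sum, Finset.mul_sum, ← Finset.sum_sub_distrib, ← Finset.sum_add_distrib]
    apply Finset.sum_congr rfl
    intro m hm
    simp only [gg]
    ring
  rw [hsplit, k8 n hn]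
  ring

lemma key (u : ℝ) (n : ℕ) :
    ∑ m ∈ Finset.range (n+1), ff m * ff (n-m) * (1 + 2 * (harm m - u/2) * ((n:ℝ) - 2*m))
      = if n = 0 then 1 else 0 := by
  have hsplit : ∑ m ∈ Finset.range (n+1), ff m * ff (n-m) * (1 + 2 * (harm m - u/2) * ((n:ℝ) - 2*m))
      = (∑ m ∈ Finset.range (n+1), ff m * ff (n-m) * (1 + 2 * harm m * ((n:ℝ) - 2*m)))
        - u * ∑ m ∈ Finset.range (n+1), ff m * ff (n-m) * ((n:ℝ) - 2*m) := by
    rw [Finset.mul_sum, ← Finset.sum_sub_distrib]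
    exact Finset.sum_congr rfl fun m hm => by ring
  rw [hsplit, keyU, mul_zero, sub_zero]
  rcases Nat.eq_zero_or_pos n with h | h
  · subst h
    simp [ff_zero, harm_zero]
  · rw [key0 n h, if_neg (by omega)]

def PP2 (u : ℝ) (r : ℕ) : ℝ :=
  if r % 2 = 0 then Real.exp ((r/2 : ℕ) * u) / ((Nat.factorial (r/2) : ℝ))^2 else 0
def QQ2 (u : ℝ) (r : ℕ) : ℝ :=
  if r % 2 = 1 then ((r/2+1 : ℕ) : ℝ) * Real.exp (((r/2+1 : ℕ):ℝ) * u)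
      / ((Nat.factorial (r/2+1) : ℝ))^2 else 0
def PP1 (u : ℝ) (r : ℕ) : ℝ :=
  if r % 2 = 1 then -2 * (harm (r/2) - u/2) * Real.exp (((r/2 : ℕ):ℝ) * u)
      / ((Nat.factorial (r/2) : ℝ))^2 else 0
def QQ1 (u : ℝ) (r : ℕ) : ℝ :=
  if r % 2 = 0 then (1 - 2*((r/2 : ℕ):ℝ)*(harm (r/2) - u/2)) * Real.exp (((r/2:ℕ):ℝ) * u)
      / ((Nat.factorial (r/2) : ℝ))^2 else 0

lemma sum_even_support (h : ℕ → ℝ) (N : ℕ) (h0 : ∀ r, r % 2 = 1 → h r = 0) :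
    ∑ r ∈ Finset.range N, h r = ∑ m ∈ Finset.range ((N+1)/2), h (2*m) := by
  induction N with
  | zero => simp
  | succ N ih =>
    rw [Finset.sum_range_succ, ih]
    rcases Nat.even_or_odd N with ⟨t, ht⟩ | ⟨t, ht⟩
    · have e1 : (N+1+1)/2 = (N+1)/2 + 1 := by omega
      have e2 : 2 * ((N+1)/2) = N := by omega
      rw [e1, Finset.sum_range_succ, e2]
    · have e1 : (N+1+1)/2 = (N+1)/2 := by omega
      rw [h0 N (by omega), add_zero, e1]

lemma sum_odd_support (h : ℕ → ℝ) (N : ℕ) (h0 : ∀ r, r % 2 = 0 → h r = 0) :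
    ∑ r ∈ Finset.range N, h r = ∑ m ∈ Finset.range (N/2), h (2*m+1) := by
  induction N with
  | zero => simp
  | succ N ih =>
    rw [Finset.sum_range_succ, ih]
    rcases Nat.even_or_odd N with ⟨t, ht⟩ | ⟨t, ht⟩
    · have e1 : (N+1)/2 = N/2 := by omega
      rw [h0 N (by omega), add_zero, e1]
    · have e1 : (N+1)/2 = N/2 + 1 := by omega
      have e2 : 2 * (N/2) + 1 = N := by omega
      rw [e1, Finset.sum_range_succ, e2]

lemma dv_theta2 (p : ℕ) (v u : ℝ) : dv (theta2 p) v u = GG (PP2 u) p v := by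
  have hder : HasDerivAt (fun v' => theta2 p v' u)
      (∑ m ∈ Finset.range ((p+1)/2+1),
        Real.exp (m*u) * (((p+1-2*m : ℕ):ℝ) * v^(p+1-2*m-1))
          / ((Nat.factorial m : ℝ)^2 * (Nat.factorial (p+1-2*m) : ℝ))) v := by
    have : (fun v' => theta2 p v' u) = fun v' => ∑ m ∈ Finset.range ((p+1)/2+1),
        Real.exp (m*u) * v'^(p+1-2*m)
          / ((Nat.factorial m : ℝ)^2 * (Nat.factorial (p+1-2*m) : ℝ)) := rfl
    rw [this]
    apply HasDerivAt.fun_sum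
    intro m _
    exact ((hasDerivAt_pow (p+1-2*m) v).const_mul (Real.exp (m*u))).div_const _
  rw [dv, hder.deriv, GG]
  rw [sum_even_support (fun r => PP2 u r * v ^ (p-r) / (Nat.factorial (p-r) : ℝ)) (p+1)
    (fun r hr => by simp [PP2, hr])]
  rw [← Finset.sum_subset
    (Finset.range_subset_range.mpr (by omega : (p+1+1)/2 ≤ (p+1)/2+1))
    (fun m hm1 hm2 => by
      have ha : m < (p+1)/2+1 := Finset.mem_range.mp hm1
      have hb : ¬ (m < (p+1+1)/2) := fun h => hm2 (Finset.mem_range.mpr h)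
      have h1 : p+1-2*m = 0 := by omega
      rw [h1]
      simp)]
  apply Finset.sum_congr rfl
  intro m hm
  have hmp : 2*m ≤ p := by
    have := Finset.mem_range.mp hm
    omega
  have h1 : p+1-2*m = (p-2*m)+1 := by omega
  have h2 : p - 2*m = p - 2*m := rfl
  have h3 : (2*m) % 2 = 0 := by omega
  have h4 : (2*m)/2 = m := by omega
  have h5 : p+1-2*m-1 = p-2*m := by omega
  rw [PP2, if_pos h3, h4, h5, h1, Nat.factorial_succ]
  obtain ⟨k, hk⟩ : ∃ k, p - 2*m = k := ⟨_, rfl⟩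
  rw [hk]
  have h6 := fact_ne m
  have h7 := fact_ne k
  have h8 : ((k:ℕ):ℝ) + 1 ≠ 0 := by positivity
  push_cast
  field_simp

lemma dv_theta1 (p : ℕ) (v u : ℝ) : dv (theta1 p) v u = GG (PP1 u) p v := by
  have hder : HasDerivAt (fun v' => theta1 p v' u)
      (-2 * ∑ m ∈ Finset.range (p/2+1),
        ((harm m - u/2) * Real.exp (m*u)) * (((p-2*m : ℕ):ℝ) * v^(p-2*m-1))
          / ((Nat.factorial m : ℝ)^2 * (Nat.factorial (p-2*m) : ℝ))) v := by
    have e : (fun v' => theta1 p v' u) = fun v' => -2 * ∑ m ∈ Finset.range (p/2+1),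
        (harm m - u/2) * Real.exp (m*u) * v'^(p-2*m)
          / ((Nat.factorial m : ℝ)^2 * (Nat.factorial (p-2*m) : ℝ)) := rfl
    rw [e]
    apply HasDerivAt.const_mul
    apply HasDerivAt.fun_sum
    intro m _
    exact ((hasDerivAt_pow (p-2*m) v).const_mul ((harm m - u/2) * Real.exp (m*u))).div_const _
  rw [dv, hder.deriv, GG]
  rw [sum_odd_support (fun r => PP1 u r * v ^ (p-r) / (Nat.factorial (p-r) : ℝ)) (p+1)
    (fun r hr => by simp [PP1, hr])]
  rw [Finset.mul_sum]
  rw [← Finset.sum_subset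
    (Finset.range_subset_range.mpr (by omega : (p+1)/2 ≤ p/2+1))
    (fun m hm1 hm2 => by
      have ha : m < p/2+1 := Finset.mem_range.mp hm1
      have hb : ¬ (m < (p+1)/2) := fun h => hm2 (Finset.mem_range.mpr h)
      have h1 : p-2*m = 0 := by omega
      rw [h1]
      simp)]
  apply Finset.sum_congr rfl
  intro m hm
  have hmp : 2*m+1 ≤ p := by
    have := Finset.mem_range.mp hm
    omega
  have h3 : (2*m+1) % 2 = 1 := by omega
  have h4 : (2*m+1)/2 = m := by omega
  have h5 : p-(2*m+1) = p-2*m-1 := by omega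
  rw [PP1, if_pos h3, h4, h5]
  have h1 : p-2*m = (p-2*m-1)+1 := by omega
  rw [h1, Nat.factorial_succ]
  obtain ⟨k, hk⟩ : ∃ k, p - 2*m - 1 = k := ⟨_, rfl⟩
  rw [hk]
  have h6 := fact_ne m
  have h7 := fact_ne k
  have h8 : ((k:ℕ):ℝ) + 1 ≠ 0 := by positivity
  push_cast
  field_simp

lemma du_theta2 (p : ℕ) (v u : ℝ) : du (theta2 p) v u = GG (QQ2 u) p v := by
  have hder : HasDerivAt (fun u' => theta2 p v u')
      (∑ m ∈ Finset.range ((p+1)/2+1),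
        Real.exp (m*u) * ((m:ℝ)*1) * v^(p+1-2*m)
          / ((Nat.factorial m : ℝ)^2 * (Nat.factorial (p+1-2*m) : ℝ))) u := by
    have e : (fun u' => theta2 p v u') = fun u' => ∑ m ∈ Finset.range ((p+1)/2+1),
        Real.exp (m*u') * v^(p+1-2*m)
          / ((Nat.factorial m : ℝ)^2 * (Nat.factorial (p+1-2*m) : ℝ)) := rfl
    rw [e]
    apply HasDerivAt.fun_sum
    intro m _
    exact (((hasDerivAt_id' u).const_mul (m:ℝ)).exp.mul_const _).div_const _
  rw [du, hder.deriv, GG]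
  rw [sum_odd_support (fun r => QQ2 u r * v ^ (p-r) / (Nat.factorial (p-r) : ℝ)) (p+1)
    (fun r hr => by simp [QQ2, hr])]
  rw [Finset.sum_range_succ'
    (fun m => Real.exp (m*u) * ((m:ℝ)*1) * v^(p+1-2*m)
      / ((Nat.factorial m : ℝ)^2 * (Nat.factorial (p+1-2*m) : ℝ)))]
  rw [show Real.exp ((0:ℕ)*u) * (((0:ℕ):ℝ)*1) * v^(p+1-2*0)
      / ((Nat.factorial 0 : ℝ)^2 * (Nat.factorial (p+1-2*0) : ℝ)) = 0 by simp, add_zero]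
  apply Finset.sum_congr rfl
  intro i hi
  have hip : 2*i+1 ≤ p := by
    have := Finset.mem_range.mp hi
    omega
  have h3 : (2*i+1) % 2 = 1 := by omega
  have h4 : (2*i+1)/2 = i := by omega
  have h5 : p+1-2*(i+1) = p-(2*i+1) := by omega
  rw [QQ2, if_pos h3, h4, h5]
  obtain ⟨k, hk⟩ : ∃ k, p - (2*i+1) = k := ⟨_, rfl⟩
  rw [hk]
  have h6 := fact_ne (i+1)
  have h7 := fact_ne k
  push_cast
  field_simp

lemma du_theta1 (p : ℕ) (v u : ℝ) : du (theta1 p) v u = GG (QQ1 u) p v := by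
  have hder : HasDerivAt (fun u' => theta1 p v u')
      (-2 * ∑ m ∈ Finset.range (p/2+1),
        (-(1/2) * Real.exp (m*u) + (harm m - u/2) * (Real.exp (m*u) * ((m:ℝ)*1)))
          * v^(p-2*m)
          / ((Nat.factorial m : ℝ)^2 * (Nat.factorial (p-2*m) : ℝ))) u := by
    have e : (fun u' => theta1 p v u') = fun u' => -2 * ∑ m ∈ Finset.range (p/2+1),
        (harm m - u'/2) * Real.exp (m*u') * v^(p-2*m)
          / ((Nat.factorial m : ℝ)^2 * (Nat.factorial (p-2*m) : ℝ)) := rfl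
    rw [e]
    apply HasDerivAt.const_mul
    apply HasDerivAt.fun_sum
    intro m _
    have h1 : HasDerivAt (fun u' => harm m - u'/2) (-(1/2)) u := by
      simpa using (HasDerivAt.const_sub (harm m) ((hasDerivAt_id' u).div_const 2))
    have h2 : HasDerivAt (fun u' => Real.exp (m*u')) (Real.exp (m*u) * ((m:ℝ)*1)) u :=
      ((hasDerivAt_id' u).const_mul (m:ℝ)).exp
    exact ((h1.mul h2).mul_const _).div_const _
  rw [du, hder.deriv, GG]
  rw [sum_even_support (fun r => QQ1 u r * v ^ (p-r) / (Nat.factorial (p-r) : ℝ)) (p+1)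
    (fun r hr => by simp [QQ1, hr])]
  rw [Finset.mul_sum]
  rw [show (p+1+1)/2 = p/2+1 by omega]
  apply Finset.sum_congr rfl
  intro m hm
  have h3 : (2*m) % 2 = 0 := by omega
  have h4 : (2*m)/2 = m := by omega
  rw [QQ1, if_pos h3, h4]
  obtain ⟨k, hk⟩ : ∃ k, p - 2*m = k := ⟨_, rfl⟩
  rw [hk]
  have h6 := fact_ne m
  have h7 := fact_ne k
  push_cast
  field_simp
  ring

lemma alt_reflect (T : ℕ → ℝ) (n : ℕ) :
    ∑ r ∈ Finset.range (n+1), (-1:ℝ)^(n-r) * T r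
      = (-1:ℝ)^n * ∑ r ∈ Finset.range (n+1), (-1:ℝ)^(n-r) * T (n-r) := by
  rw [sum_reflect (fun r => (-1:ℝ)^(n-r) * T r) n, Finset.mul_sum]
  apply Finset.sum_congr rfl
  intro r hr
  have hrn : r ≤ n := by simpa [Nat.lt_succ_iff] using hr
  have h1 : n - (n-r) = r := by omega
  rw [h1]
  have h2 : (-1:ℝ)^r = (-1:ℝ)^n * (-1:ℝ)^(n-r) := by
    rw [← pow_add, show n + (n-r) = 2*(n-r) + r from by omega, pow_add, pow_mul]
    norm_num
  rw [h2, mul_assoc]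

lemma alt_symm_zero (T : ℕ → ℝ) (n : ℕ) (hn : n % 2 = 1) (hsym : ∀ r ≤ n, T (n-r) = T r) :
    ∑ r ∈ Finset.range (n+1), (-1:ℝ)^(n-r) * T r = 0 := by
  have h := alt_reflect T n
  have h2 : ∑ r ∈ Finset.range (n+1), (-1:ℝ)^(n-r) * T (n-r)
      = ∑ r ∈ Finset.range (n+1), (-1:ℝ)^(n-r) * T r := by
    apply Finset.sum_congr rfl
    intro r hr
    rw [hsym r (by simpa [Nat.lt_succ_iff] using hr)]
  rw [h2] at h
  have h3 : (-1:ℝ)^n = -1 := Odd.neg_one_pow (Nat.odd_iff.mpr hn)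
  rw [h3] at h
  linarith

lemma PP1_vanish (u : ℝ) {r : ℕ} (h : r % 2 = 0) : PP1 u r = 0 := by
  rw [PP1, if_neg (by omega)]
lemma QQ1_vanish (u : ℝ) {r : ℕ} (h : r % 2 = 1) : QQ1 u r = 0 := by
  rw [QQ1, if_neg (by omega)]
lemma PP2_vanish (u : ℝ) {r : ℕ} (h : r % 2 = 1) : PP2 u r = 0 := by
  rw [PP2, if_neg (by omega)]
lemma QQ2_vanish (u : ℝ) {r : ℕ} (h : r % 2 = 0) : QQ2 u r = 0 := by
  rw [QQ2, if_neg (by omega)]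

lemma final11 (n : ℕ) (u : ℝ) :
    ∑ r ∈ Finset.range (n+1),
      (-1:ℝ)^(n-r) * (PP1 u r * QQ1 u (n-r) + QQ1 u r * PP1 u (n-r)) = 0 := by
  rcases Nat.even_or_odd n with ⟨t, ht⟩ | ⟨t, ht⟩
  · apply Finset.sum_eq_zero
    intro r hr
    have hrn : r ≤ n := by simpa [Nat.lt_succ_iff] using hr
    rcases Nat.even_or_odd r with ⟨s, hs⟩ | ⟨s, hs⟩
    · rw [PP1_vanish u (r := r) (by omega), PP1_vanish u (r := n - r) (by omega)]
      ring
    · rw [QQ1_vanish u (r := r) (by omega), QQ1_vanish u (r := n - r) (by omega)]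
      ring
  · apply alt_symm_zero _ _ (by omega)
    intro r hrn
    rw [show n - (n-r) = r from by omega]
    ring

lemma final22 (n : ℕ) (u : ℝ) :
    ∑ r ∈ Finset.range (n+1),
      (-1:ℝ)^(n-r) * (PP2 u r * QQ2 u (n-r) + QQ2 u r * PP2 u (n-r)) = 0 := by
  rcases Nat.even_or_odd n with ⟨t, ht⟩ | ⟨t, ht⟩
  · apply Finset.sum_eq_zero
    intro r hr
    have hrn : r ≤ n := by simpa [Nat.lt_succ_iff] using hr
    rcases Nat.even_or_odd r with ⟨s, hs⟩ | ⟨s, hs⟩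
    · rw [QQ2_vanish u (r := r) (by omega), QQ2_vanish u (r := n - r) (by omega)]
      ring
    · rw [PP2_vanish u (r := r) (by omega), PP2_vanish u (r := n - r) (by omega)]
      ring
  · apply alt_symm_zero _ _ (by omega)
    intro r hrn
    rw [show n - (n-r) = r from by omega]
    ring

lemma final12 (n : ℕ) (u : ℝ) :
    ∑ r ∈ Finset.range (n+1),
      (-1:ℝ)^(n-r) * (PP1 u r * QQ2 u (n-r) + QQ1 u r * PP2 u (n-r))
      = if n = 0 then 1 else 0 := by
  rcases Nat.even_or_odd n with ⟨N, hN⟩ | ⟨t, ht⟩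
  · -- n = N + N
    subst hN
    have hsplit : ∑ r ∈ Finset.range (N+N+1),
        (-1:ℝ)^(N+N-r) * (PP1 u r * QQ2 u (N+N-r) + QQ1 u r * PP2 u (N+N-r))
        = (∑ r ∈ Finset.range (N+N+1), (-1:ℝ)^(N+N-r) * (PP1 u r * QQ2 u (N+N-r)))
          + ∑ r ∈ Finset.range (N+N+1), (-1:ℝ)^(N+N-r) * (QQ1 u r * PP2 u (N+N-r)) := by
      rw [← Finset.sum_add_distrib]
      exact Finset.sum_congr rfl fun r _ => by ring
    rw [hsplit]
    have hS1 : ∑ r ∈ Finset.range (N+N+1), (-1:ℝ)^(N+N-r) * (PP1 u r * QQ2 u (N+N-r))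
        = ∑ m ∈ Finset.range (N+1),
            (2*(harm m - u/2) * ((N:ℝ) - (m:ℝ))) * (ff m * ff (N-m)) * Real.exp ((N:ℝ)*u) := by
      rw [sum_odd_support (fun r => (-1:ℝ)^(N+N-r) * (PP1 u r * QQ2 u (N+N-r))) (N+N+1)
        (fun r hr => by simp only [PP1_vanish u hr]; ring)]
      rw [show (N+N+1)/2 = N from by omega]
      rw [Finset.sum_range_succ]
      have hlast : (2*(harm N - u/2) * ((N:ℝ) - (N:ℝ))) * (ff N * ff (N-N)) * Real.exp ((N:ℝ)*u)
          = 0 := by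
        rw [sub_self]; ring
      rw [hlast, add_zero]
      apply Finset.sum_congr rfl
      intro m hm
      have hmN : m < N := Finset.mem_range.mp hm
      have e1 : N+N-(2*m+1) = 2*(N-m-1)+1 := by omega
      rw [e1]
      have hsign : (-1:ℝ)^(2*(N-m-1)+1) = -1 := Odd.neg_one_pow ⟨N-m-1, by ring⟩
      rw [hsign]
      rw [PP1, if_pos (by omega : (2*m+1) % 2 = 1), show (2*m+1)/2 = m from by omega]
      rw [QQ2, if_pos (by omega : (2*(N-m-1)+1) % 2 = 1),
        show (2*(N-m-1)+1)/2 = N-m-1 from by omega,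
        show N-m-1+1 = N-m from by omega]
      have hcast : ((N-m:ℕ):ℝ) = (N:ℝ) - (m:ℝ) := by
        have : m ≤ N := by omega
        push_cast [this]; ring
      rw [hcast, ff, ff]
      have hexp : Real.exp ((m:ℝ)*u) * Real.exp (((N:ℝ) - (m:ℝ))*u) = Real.exp ((N:ℝ)*u) := by
        rw [← Real.exp_add]; congr 1; ring
      linear_combination (2*(harm m - u/2) * ((N:ℝ)-(m:ℝ))
        / ((Nat.factorial m : ℝ)^2 * (Nat.factorial (N-m) : ℝ)^2)) * hexp
    have hS2 : ∑ r ∈ Finset.range (N+N+1), (-1:ℝ)^(N+N-r) * (QQ1 u r * PP2 u (N+N-r))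
        = ∑ m ∈ Finset.range (N+1),
            (1 - 2*(m:ℝ)*(harm m - u/2)) * (ff m * ff (N-m)) * Real.exp ((N:ℝ)*u) := by
      rw [sum_even_support (fun r => (-1:ℝ)^(N+N-r) * (QQ1 u r * PP2 u (N+N-r))) (N+N+1)
        (fun r hr => by simp only [QQ1_vanish u hr]; ring)]
      rw [show (N+N+1+1)/2 = N+1 from by omega]
      apply Finset.sum_congr rfl
      intro m hm
      have hmN : m ≤ N := by
        have := Finset.mem_range.mp hm
        omega
      have e1 : N+N-2*m = 2*(N-m) := by omega
      rw [e1]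
      have hsign : (-1:ℝ)^(2*(N-m)) = 1 := Even.neg_one_pow ⟨N-m, by omega⟩
      rw [hsign]
      rw [QQ1, if_pos (by omega : (2*m) % 2 = 0), show (2*m)/2 = m from by omega]
      rw [PP2, if_pos (by omega : (2*(N-m)) % 2 = 0), show (2*(N-m))/2 = N-m from by omega]
      have hcast : ((N-m:ℕ):ℝ) = (N:ℝ) - (m:ℝ) := by push_cast [hmN]; ring
      rw [hcast, ff, ff]
      have hexp : Real.exp ((m:ℝ)*u) * Real.exp (((N:ℝ) - (m:ℝ))*u) = Real.exp ((N:ℝ)*u) := by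
        rw [← Real.exp_add]; congr 1; ring
      linear_combination ((1 - 2*(m:ℝ)*(harm m - u/2))
        / ((Nat.factorial m : ℝ)^2 * (Nat.factorial (N-m) : ℝ)^2)) * hexp
    rw [hS1, hS2, ← Finset.sum_add_distrib]
    have hmerge : ∑ m ∈ Finset.range (N+1),
        ((2*(harm m - u/2) * ((N:ℝ) - (m:ℝ))) * (ff m * ff (N-m)) * Real.exp ((N:ℝ)*u)
          + (1 - 2*(m:ℝ)*(harm m - u/2)) * (ff m * ff (N-m)) * Real.exp ((N:ℝ)*u))
        = (∑ m ∈ Finset.range (N+1),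
            ff m * ff (N-m) * (1 + 2 * (harm m - u/2) * ((N:ℝ) - 2*m))) * Real.exp ((N:ℝ)*u) := by
      rw [Finset.sum_mul]
      exact Finset.sum_congr rfl fun m _ => by ring
    rw [hmerge, key u N]
    rcases Nat.eq_zero_or_pos N with h | h
    · subst h
      norm_num
    · rw [if_neg (by omega), if_neg (by omega), zero_mul]
  · -- n odd
    rw [if_neg (by omega)]
    apply Finset.sum_eq_zero
    intro r hr
    have hrn : r ≤ n := by simpa [Nat.lt_succ_iff] using hr
    rcases Nat.even_or_odd r with ⟨s, hs⟩ | ⟨s, hs⟩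
    · rw [PP1_vanish u (by omega), PP2_vanish u (r := n - r) (by omega)]
      ring
    · rw [QQ1_vanish u (by omega), QQ2_vanish u (r := n - r) (by omega)]
      ring

lemma final21 (n : ℕ) (u : ℝ) :
    ∑ r ∈ Finset.range (n+1),
      (-1:ℝ)^(n-r) * (PP2 u r * QQ1 u (n-r) + QQ2 u r * PP1 u (n-r))
      = if n = 0 then 1 else 0 := by
  rw [alt_reflect (fun r => PP2 u r * QQ1 u (n-r) + QQ2 u r * PP1 u (n-r)) n]
  have h2 : ∑ r ∈ Finset.range (n+1),
      (-1:ℝ)^(n-r) * (PP2 u (n-r) * QQ1 u (n-(n-r)) + QQ2 u (n-r) * PP1 u (n-(n-r)))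
      = ∑ r ∈ Finset.range (n+1),
        (-1:ℝ)^(n-r) * (PP1 u r * QQ2 u (n-r) + QQ1 u r * PP2 u (n-r)) := by
    apply Finset.sum_congr rfl
    intro r hr
    have hrn : r ≤ n := by simpa [Nat.lt_succ_iff] using hr
    rw [show n - (n-r) = r from by omega]
    ring
  rw [h2, final12]
  rcases Nat.eq_zero_or_pos n with h | h
  · subst h; norm_num
  · rw [if_neg (by omega : ¬ n = 0)]
    ring


lemma pair_split (c d c' d' : ℕ → ℝ) (v : ℝ) (n : ℕ) :
    ∑ i ∈ Finset.range (n+1),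
      (-1:ℝ)^(n-i) * (GG c i v * GG d (n-i) v + GG c' i v * GG d' (n-i) v)
      = ∑ r ∈ Finset.range (n+1), (-1:ℝ)^(n-r) * (c r * d (n-r) + c' r * d' (n-r)) := by
  have h : ∑ i ∈ Finset.range (n+1),
      (-1:ℝ)^(n-i) * (GG c i v * GG d (n-i) v + GG c' i v * GG d' (n-i) v)
      = (∑ i ∈ Finset.range (n+1), (-1:ℝ)^(n-i) * (GG c i v * GG d (n-i) v))
        + ∑ i ∈ Finset.range (n+1), (-1:ℝ)^(n-i) * (GG c' i v * GG d' (n-i) v) := by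
    rw [← Finset.sum_add_distrib]
    exact Finset.sum_congr rfl fun i _ => by ring
  rw [h, core, core, ← Finset.sum_add_distrib]
  exact Finset.sum_congr rfl fun r _ => by ring


/-- Pairing of the gradients of the generating series `θ_α(z)` and `θ_β(−z)` gives `η_{αβ}`:
`Σ_{i=0}^n (−1)^{n−i} (∂_vθ_{α,i} ∂_uθ_{β,n−i} + ∂_uθ_{α,i} ∂_vθ_{β,n−i})` equals `η_{αβ}`
for `n = 0` and `0` for `n ≥ 1`. -/
theorem theta_gradient_pairing (a b : Fin 2) (n : ℕ) (v u : ℝ) :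
    ∑ i ∈ Finset.range (n + 1), (-1 : ℝ) ^ (n - i) *
        (dv (theta a i) v u * du (theta b (n - i)) v u
          + du (theta a i) v u * dv (theta b (n - i)) v u)
      = if n = 0 then eta a b else 0 := by
  have t0 : theta 0 = theta1 := by simp [theta]
  have t1 : theta 1 = theta2 := by simp [theta]
  have e00 : eta 0 0 = (0:ℝ) := by simp [eta]
  have e01 : eta 0 1 = (1:ℝ) := by simp [eta]
  have e10 : eta 1 0 = (1:ℝ) := by simp [eta]
  have e11 : eta 1 1 = (0:ℝ) := by simp [eta]
  have ha : a = 0 ∨ a = 1 := by fin_cases a; exacts [Or.inl rfl, Or.inr rfl]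
  have hb : b = 0 ∨ b = 1 := by fin_cases b; exacts [Or.inl rfl, Or.inr rfl]
  rcases ha with rfl | rfl <;> rcases hb with rfl | rfl
  · rw [t0, e00]
    simp only [dv_theta1, du_theta1]
    rw [pair_split (PP1 u) (QQ1 u) (QQ1 u) (PP1 u) v n, final11]
    simp
  · rw [t0, t1, e01]
    simp only [dv_theta1, du_theta2, du_theta1, dv_theta2]
    rw [pair_split (PP1 u) (QQ2 u) (QQ1 u) (PP2 u) v n, final12]
  · rw [t0, t1, e10]
    simp only [dv_theta1, du_theta2, du_theta1, dv_theta2]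
    rw [pair_split (PP2 u) (QQ1 u) (QQ2 u) (PP1 u) v n, final21]
  · rw [t1, e11]
    simp only [dv_theta2, du_theta2]
    rw [pair_split (PP2 u) (QQ2 u) (QQ2 u) (PP2 u) v n, final22]
    simp

end Toda
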